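/- arXiv:2010.16116 — 4 statements merged into one kernel-verified Lean document; each statement's English description precedes it below -/
import Mathlib

section
/- Let X1 and X2 be two distinct points of the Euclidean plane ℝ² and let θ ∈ (0, π). Then the set of points Z of the plane satisfying dist(Z, X1) = dist(Z, X2) and ∠X1 Z X2 = θ (the unsigned angle at vertex Z between the rays to X1 and X2) has exactly two elements. For θ = π, this set has exactly one element, namely the midpoint of the segment [X1, X2]. -/
open EuclideanGeometry Real

section Aux
open RealInnerProductSpace

noncomputable def perp2 (v : EuclideanSpace ℝ (Fin 2)) : EuclideanSpace ℝ (Fin 2) :=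
  !₂[-(v 1), v 0]

lemma perp2_inner (v : EuclideanSpace ℝ (Fin 2)) : ⟪v, perp2 v⟫ = 0 := by
  simp [perp2, PiLp.inner_apply, Fin.sum_univ_two]
  ring

lemma perp2_inner_self (v : EuclideanSpace ℝ (Fin 2)) : ⟪perp2 v, perp2 v⟫ = ⟪v, v⟫ := by
  rw [perp2, PiLp.inner_apply, PiLp.inner_apply]; simp [Fin.sum_univ_two]
  ring

lemma perp2_ne_zero {v : EuclideanSpace ℝ (Fin 2)} (hv : v ≠ 0) : perp2 v ≠ 0 := by
  intro h
  apply hv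
  ext i
  fin_cases i
  · have := congrArg (· 1) h
    simpa [perp2] using this
  · have := congrArg (· 0) h
    simpa [perp2] using this

lemma eq_smul_perp2 {v w : EuclideanSpace ℝ (Fin 2)} (hv : v ≠ 0) (h : ⟪w, v⟫ = 0) :
    ∃ t : ℝ, w = t • perp2 v := by
  have hs : v 0 ^ 2 + v 1 ^ 2 ≠ 0 := by
    intro hz
    apply hv
    have h0 : v 0 = 0 ∧ v 1 = 0 := by
      constructor <;> nlinarith [sq_nonneg (v 0), sq_nonneg (v 1)]
    ext i; fin_cases i <;> simp [h0.1, h0.2]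
  have h' : w 0 * v 0 + w 1 * v 1 = 0 := by
    have h2 := h
    simp [PiLp.inner_apply, Fin.sum_univ_two] at h2
    linarith
  refine ⟨(w 1 * v 0 - w 0 * v 1) / (v 0 ^ 2 + v 1 ^ 2), ?_⟩
  ext i
  fin_cases i <;> simp [perp2] <;> field_simp
  · linear_combination v 0 * h'
  · linear_combination v 1 * h'

/-- The key computation: the angle at a point of the perpendicular bisector. -/
lemma angle_on_bisector (X1 X2 : EuclideanSpace ℝ (Fin 2)) (hne : X1 ≠ X2) (t : ℝ) :
    ∠ X1 (midpoint ℝ X1 X2 + t • perp2 (X2 - X1)) X2 =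
      Real.arccos ((t ^ 2 - 1/4) / (t ^ 2 + 1/4)) := by
  set v := X2 - X1 with hvdef
  have hv : v ≠ 0 := sub_ne_zero.2 hne.symm
  set n := perp2 v with hndef
  set m := midpoint ℝ X1 X2 with hmdef
  set Z := m + t • n with hZdef
  have hm1 : X1 - Z = -((2:ℝ)⁻¹ • v) - t • n := by
    rw [hZdef, hmdef, midpoint_eq_smul_add, hvdef]
    match_scalars <;> norm_num
  have hm2 : X2 - Z = (2:ℝ)⁻¹ • v - t • n := by
    rw [hZdef, hmdef, midpoint_eq_smul_add, hvdef]
    match_scalars <;> norm_num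
  have hV : (0:ℝ) < ⟪v, v⟫ := by
    rcases (real_inner_self_nonneg : (0:ℝ) ≤ ⟪v, v⟫).lt_or_eq with h | h
    · exact h
    · exact absurd (real_inner_self_nonpos.1 h.ge) hv
  set V := (⟪v, v⟫ : ℝ) with hVdef
  have hvn : ⟪v, n⟫ = 0 := perp2_inner v
  have hnv : ⟪n, v⟫ = 0 := by rw [real_inner_comm]; exact hvn
  have hnn : ⟪n, n⟫ = V := perp2_inner_self v
  have hab : ⟪X1 - Z, X2 - Z⟫ = (t ^ 2 - 1/4) * V := by
    rw [hm1, hm2]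
    simp only [inner_sub_left, inner_sub_right, inner_neg_left, inner_neg_right,
      real_inner_smul_left, real_inner_smul_right, hvn, hnv, hnn]
    ring
  have haa : ⟪X1 - Z, X1 - Z⟫ = (t ^ 2 + 1/4) * V := by
    rw [hm1]
    simp only [inner_sub_left, inner_sub_right, inner_neg_left, inner_neg_right,
      real_inner_smul_left, real_inner_smul_right, hvn, hnv, hnn]
    ring
  have hbb : ⟪X2 - Z, X2 - Z⟫ = (t ^ 2 + 1/4) * V := by
    rw [hm2]
    simp only [inner_sub_left, inner_sub_right, inner_neg_left, inner_neg_right,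
      real_inner_smul_left, real_inner_smul_right, hvn, hnv, hnn]
    ring
  have hna : ‖X1 - Z‖ = ‖X2 - Z‖ := by
    have h1 : ‖X1 - Z‖ ^ 2 = ‖X2 - Z‖ ^ 2 := by
      rw [← real_inner_self_eq_norm_sq, ← real_inner_self_eq_norm_sq, haa, hbb]
    exact (sq_eq_sq₀ (norm_nonneg _) (norm_nonneg _)).1 h1
  have hmul : ‖X1 - Z‖ * ‖X2 - Z‖ = (t ^ 2 + 1/4) * V := by
    rw [← hna, ← real_inner_self_eq_norm_mul_norm, haa]
  show InnerProductGeometry.angle (X1 -ᵥ Z) (X2 -ᵥ Z) = _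
  rw [InnerProductGeometry.angle]
  have hsub : (X1 -ᵥ Z : EuclideanSpace ℝ (Fin 2)) = X1 - Z := rfl
  have hsub2 : (X2 -ᵥ Z : EuclideanSpace ℝ (Fin 2)) = X2 - Z := rfl
  rw [hsub, hsub2, hab, hmul, mul_div_mul_right _ _ hV.ne']

lemma bisector_param (X1 X2 : EuclideanSpace ℝ (Fin 2)) (hne : X1 ≠ X2)
    (Z : EuclideanSpace ℝ (Fin 2)) :
    dist Z X1 = dist Z X2 ↔ ∃ t : ℝ, Z = midpoint ℝ X1 X2 + t • perp2 (X2 - X1) := by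
  have hv : X2 - X1 ≠ 0 := sub_ne_zero.2 hne.symm
  rw [← AffineSubspace.mem_perpBisector_iff_dist_eq,
    AffineSubspace.mem_perpBisector_iff_inner_eq_zero]
  have hsub : (Z -ᵥ midpoint ℝ X1 X2 : EuclideanSpace ℝ (Fin 2)) = Z - midpoint ℝ X1 X2 := rfl
  have hsub2 : (X2 -ᵥ X1 : EuclideanSpace ℝ (Fin 2)) = X2 - X1 := rfl
  rw [hsub, hsub2]
  constructor
  · intro h
    obtain ⟨t, ht⟩ := eq_smul_perp2 hv h
    exact ⟨t, by rw [← ht]; abel⟩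
  · rintro ⟨t, rfl⟩
    have h5 : midpoint ℝ X1 X2 + t • perp2 (X2 - X1) - midpoint ℝ X1 X2 = t • perp2 (X2 - X1) := by
      abel
    rw [h5, real_inner_smul_left, real_inner_comm, perp2_inner, mul_zero]

end Aux

/-- On the perpendicular bisector of a pair of distinct points of the plane,
for each angle `θ ∈ (0, π)` there are exactly two points seeing the pair with
unsigned angle `θ`; for `θ = π` there is exactly one such point, the midpoint. -/
theorem bisector_points_with_angle (X1 X2 : EuclideanSpace ℝ (Fin 2))
    (hne : X1 ≠ X2) (θ : ℝ) (hθ : θ ∈ Set.Ioo (0 : ℝ) π) :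
    {Z : EuclideanSpace ℝ (Fin 2) |
        dist Z X1 = dist Z X2 ∧ ∠ X1 Z X2 = θ}.ncard = 2 ∧
    {Z : EuclideanSpace ℝ (Fin 2) |
        dist Z X1 = dist Z X2 ∧ ∠ X1 Z X2 = π} = {midpoint ℝ X1 X2} := by
  obtain ⟨hθ0, hθπ⟩ := hθ
  set m := midpoint ℝ X1 X2 with hmdef
  set n := perp2 (X2 - X1) with hndef
  have hv : X2 - X1 ≠ 0 := sub_ne_zero.2 hne.symm
  have hn : n ≠ 0 := perp2_ne_zero hv
  have key : ∀ t : ℝ, ∠ X1 (m + t • n) X2 = Real.arccos ((t^2 - 1/4)/(t^2 + 1/4)) :=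
    angle_on_bisector X1 X2 hne
  have hdenom : ∀ t : ℝ, (0:ℝ) < t^2 + 1/4 := fun t => by positivity
  have hratio_mem : ∀ t : ℝ, -1 ≤ (t^2 - 1/4)/(t^2 + 1/4) ∧ (t^2 - 1/4)/(t^2 + 1/4) ≤ 1 := by
    intro t
    constructor
    · rw [le_div_iff₀ (hdenom t)]; nlinarith [sq_nonneg t]
    · rw [div_le_one (hdenom t)]; nlinarith [sq_nonneg t]
  constructor
  · -- the θ part
    set c := Real.cos θ with hc
    have hc1 : c < 1 := by
      have := Real.cos_lt_cos_of_nonneg_of_le_pi le_rfl hθπ.le hθ0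
      simpa using this
    have hcm1 : -1 < c := by
      have := Real.cos_lt_cos_of_nonneg_of_le_pi hθ0.le le_rfl hθπ
      simpa [Real.cos_pi] using this
    set s := (1 + c)/(4*(1 - c)) with hs
    have hspos : 0 < s := by apply div_pos <;> linarith
    set t0 := Real.sqrt s with ht0def
    have ht0 : 0 < t0 := Real.sqrt_pos.2 hspos
    have ht0sq : t0^2 = s := Real.sq_sqrt hspos.le
    have hratio_eq : ∀ t : ℝ, t^2 = s → (t^2 - 1/4)/(t^2 + 1/4) = c := by
      intro t h
      have h1c : (1:ℝ) - c ≠ 0 := by linarith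
      rw [h, hs]
      rw [div_eq_iff (by rw [hs] at h; rw [← h]; exact (hdenom t).ne')]
      field_simp
      ring
    have hiff : ∀ t : ℝ, Real.arccos ((t^2 - 1/4)/(t^2 + 1/4)) = θ ↔ (t = t0 ∨ t = -t0) := by
      intro t
      constructor
      · intro h
        have hcos : (t^2 - 1/4)/(t^2 + 1/4) = c := by
          rw [hc, ← h, Real.cos_arccos (hratio_mem t).1 (hratio_mem t).2]
        have ht2 : t^2 = s := by
          rw [div_eq_iff (hdenom t).ne'] at hcos
          rw [hs]
          rw [eq_div_iff (by intro hz; apply absurd hc1; simp [sub_eq_zero] at hz; linarith)]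
          linarith [hcos]
        have h2 : t^2 = t0^2 := ht2.trans ht0sq.symm
        exact sq_eq_sq_iff_eq_or_eq_neg.1 h2
      · rintro (rfl | rfl)
        · rw [hratio_eq t0 ht0sq, hc, Real.arccos_cos hθ0.le hθπ.le]
        · rw [hratio_eq (-t0) (by rw [neg_pow]; simpa using ht0sq), hc,
            Real.arccos_cos hθ0.le hθπ.le]
    have hset : {Z : EuclideanSpace ℝ (Fin 2) |
        dist Z X1 = dist Z X2 ∧ ∠ X1 Z X2 = θ} = {m + t0 • n, m + (-t0) • n} := by
      ext Z
      simp only [Set.mem_setOf_eq, Set.mem_insert_iff, Set.mem_singleton_iff]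
      constructor
      · rintro ⟨hd, ha⟩
        obtain ⟨t, rfl⟩ := (bisector_param X1 X2 hne Z).1 hd
        rw [key t] at ha
        rcases (hiff t).1 ha with rfl | rfl
        · exact Or.inl rfl
        · exact Or.inr rfl
      · rintro (rfl | rfl)
        · exact ⟨(bisector_param X1 X2 hne _).2 ⟨t0, rfl⟩, by rw [key t0]; exact (hiff t0).2 (Or.inl rfl)⟩
        · exact ⟨(bisector_param X1 X2 hne _).2 ⟨-t0, rfl⟩, by rw [key (-t0)]; exact (hiff (-t0)).2 (Or.inr rfl)⟩
    rw [hset]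
    apply Set.ncard_pair
    intro h
    have h2 := add_left_cancel h
    have h3 := smul_left_injective ℝ hn h2
    linarith
  · -- the π part
    ext Z
    simp only [Set.mem_setOf_eq, Set.mem_singleton_iff]
    constructor
    · rintro ⟨hd, ha⟩
      obtain ⟨t, rfl⟩ := (bisector_param X1 X2 hne Z).1 hd
      rw [key t, Real.arccos_eq_pi] at ha
      have h1 := (hratio_mem t).1
      have heq : (t^2 - 1/4)/(t^2 + 1/4) = -1 := le_antisymm ha h1
      rw [div_eq_iff (hdenom t).ne'] at heq
      have ht : t = 0 := by nlinarith [sq_nonneg t]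
      rw [ht]
      simp [hmdef]
    · rintro rfl
      refine ⟨(bisector_param X1 X2 hne _).2 ⟨0, by simp [hmdef]⟩, ?_⟩
      have h0 : m = m + (0:ℝ) • n := by simp
      rw [h0, key 0]
      norm_num [Real.arccos_neg_one]
end

section
/- For every λ > 0 and every t ∈ (0, π), ∫₀^{2π} ∫₀^∞ r e^{−λπ r²/4} ( ∫_{−r|cos φ| cot(t/2)}^{r|cos φ| cot(t/2)} e^{−λπ z²/(4 cos² φ)} dz ) dr dφ = (16 / (π λ^{3/2})) cos(t/2), where cot(t/2) = cos(t/2)/sin(t/2), and the inner integral is interpreted as 0 when cos φ = 0. -/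
open Real MeasureTheory Set Filter Topology

lemma abs_gauss_interval_le {b : ℝ} (hb : 0 < b) (a c : ℝ) :
    |∫ u in a..c, Real.exp (-b * u ^ 2)| ≤ ∫ x : ℝ, Real.exp (-b * x ^ 2) := by
  have hint := integrable_exp_neg_mul_sq hb
  have hnn : 0 ≤ᵐ[volume] fun x : ℝ => Real.exp (-b * x ^ 2) :=
    Filter.Eventually.of_forall fun x => (Real.exp_pos _).le
  have key : ∀ a c : ℝ, a ≤ c →
      |∫ u in a..c, Real.exp (-b * u ^ 2)| ≤ ∫ x : ℝ, Real.exp (-b * x ^ 2) := by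
    intro a c hac
    rw [abs_of_nonneg (intervalIntegral.integral_nonneg hac fun x _ => (Real.exp_pos _).le),
      intervalIntegral.integral_of_le hac]
    exact setIntegral_le_integral hint hnn
  rcases le_total a c with h | h
  · exact key a c h
  · rw [intervalIntegral.integral_symm, abs_neg]
    exact key c a h

set_option maxHeartbeats 1000000 in
lemma gauss_middle (b k : ℝ) (hb : 0 < b) (hk : 0 < k) :
    (∫ r in Set.Ioi (0 : ℝ),
      r * Real.exp (-b * r ^ 2) * ∫ u in (-(r * k))..(r * k), Real.exp (-b * u ^ 2)) =
    k / b * (Real.sqrt (π / (b * (1 + k ^ 2))) / 2) := by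
  have hf : Continuous fun u : ℝ => Real.exp (-b * u ^ 2) :=
    Real.continuous_exp.comp (continuous_const.mul (continuous_pow 2))
  have hg : Continuous fun u : ℝ => Real.exp (-(b * (1 + k ^ 2)) * u ^ 2) :=
    Real.continuous_exp.comp (continuous_const.mul (continuous_pow 2))
  set Φ : ℝ → ℝ := fun s => ∫ u in (0 : ℝ)..s, Real.exp (-b * u ^ 2) with hΦ_def
  set Ψ : ℝ → ℝ := fun s => ∫ u in (0 : ℝ)..s, Real.exp (-(b * (1 + k ^ 2)) * u ^ 2) with hΨ_def
  have hΦ : ∀ s, HasDerivAt Φ (Real.exp (-b * s ^ 2)) s := fun s =>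
    (hf.integral_hasStrictDerivAt 0 s).hasDerivAt
  have hΨd : ∀ s, HasDerivAt Ψ (Real.exp (-(b * (1 + k ^ 2)) * s ^ 2)) s := fun s =>
    (hg.integral_hasStrictDerivAt 0 s).hasDerivAt
  have hΦtot : ∀ r : ℝ, Φ (r * k) - Φ (-(r * k)) = ∫ u in (-(r * k))..(r * k),
      Real.exp (-b * u ^ 2) := by
    intro r
    exact intervalIntegral.integral_interval_sub_left (hf.intervalIntegrable _ _)
      (hf.intervalIntegrable _ _)
  set F : ℝ → ℝ := fun r =>
    -(1 / (2 * b)) * (Real.exp (-b * r ^ 2) * (Φ (r * k) - Φ (-(r * k)))) + k / b * Ψ r with hF_def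
  have hFderiv : ∀ r : ℝ, HasDerivAt F
      (r * Real.exp (-b * r ^ 2) * (Φ (r * k) - Φ (-(r * k)))) r := by
    intro r
    have hE : HasDerivAt (fun r : ℝ => Real.exp (-b * r ^ 2))
        (Real.exp (-b * r ^ 2) * (-b * (2 * r))) r := by
      have h1 : HasDerivAt (fun r : ℝ => -b * r ^ 2) (-b * (2 * r)) r := by
        simpa using (hasDerivAt_pow 2 r).const_mul (-b)
      exact h1.exp
    have h2 : HasDerivAt (fun r : ℝ => Φ (r * k)) (Real.exp (-b * (r * k) ^ 2) * k) r :=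
      by simpa [Function.comp_def] using (hΦ (r * k)).comp r ((hasDerivAt_id r).mul_const k)
    have h3 : HasDerivAt (fun r : ℝ => Φ (-(r * k)))
        (Real.exp (-b * (r * k) ^ 2) * (-k)) r := by
      have := (hΦ (-(r * k))).comp r (((hasDerivAt_id r).mul_const k).neg)
      simpa [neg_sq, Function.comp_def] using this
    have hD := ((hE.mul (h2.sub h3)).const_mul (-(1 / (2 * b)))).add ((hΨd r).const_mul (k / b))
    refine hD.congr_deriv ?_
    have hexp : Real.exp (-(b * (1 + k ^ 2)) * r ^ 2)
        = Real.exp (-b * r ^ 2) * Real.exp (-b * (r * k) ^ 2) := by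
      rw [← Real.exp_add]; ring_nf
    rw [hexp]
    simp only [Pi.sub_apply]
    field_simp
    ring
  -- integrability of the derivative
  have hΦcont : Continuous Φ := by
    rw [continuous_iff_continuousAt]; exact fun s => (hΦ s).continuousAt
  have hcontf' : Continuous fun r : ℝ =>
      r * Real.exp (-b * r ^ 2) * (Φ (r * k) - Φ (-(r * k))) := by
    apply Continuous.mul
    · exact continuous_id.mul hf
    · exact (hΦcont.comp (continuous_id.mul continuous_const)).sub
        (hΦcont.comp (continuous_id.mul continuous_const).neg)
  have hint : IntegrableOn (fun r : ℝ =>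
      r * Real.exp (-b * r ^ 2) * (Φ (r * k) - Φ (-(r * k)))) (Set.Ioi 0) := by
    apply Integrable.mono' (g := fun r : ℝ =>
      r * Real.exp (-b * r ^ 2) * ∫ x : ℝ, Real.exp (-b * x ^ 2))
    · exact ((integrable_mul_exp_neg_mul_sq hb).mul_const _).integrableOn
    · exact hcontf'.aestronglyMeasurable.restrict
    · filter_upwards [ae_restrict_mem measurableSet_Ioi] with r hr
      rw [norm_mul, norm_mul]
      have h1 : 0 ≤ r * Real.exp (-b * r ^ 2) :=
        mul_nonneg (le_of_lt hr.out) (Real.exp_pos _).le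
      have : ‖Φ (r * k) - Φ (-(r * k))‖ ≤ ∫ x : ℝ, Real.exp (-b * x ^ 2) := by
        rw [hΦtot r]
        exact abs_gauss_interval_le hb _ _
      calc ‖r‖ * ‖Real.exp (-b * r ^ 2)‖ * ‖Φ (r * k) - Φ (-(r * k))‖
          ≤ ‖r‖ * ‖Real.exp (-b * r ^ 2)‖ * ∫ x : ℝ, Real.exp (-b * x ^ 2) := by
            apply mul_le_mul_of_nonneg_left this (by positivity)
        _ = r * Real.exp (-b * r ^ 2) * ∫ x : ℝ, Real.exp (-b * x ^ 2) := by
            rw [Real.norm_eq_abs, Real.norm_eq_abs, abs_of_nonneg (le_of_lt hr.out),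
              abs_of_nonneg (Real.exp_pos _).le]
  -- tendsto
  have hgint : IntegrableOn (fun u : ℝ => Real.exp (-(b * (1 + k ^ 2)) * u ^ 2)) (Set.Ioi 0) :=
    (integrable_exp_neg_mul_sq (by positivity)).integrableOn
  have hfint : IntegrableOn (fun u : ℝ => Real.exp (-b * u ^ 2)) (Set.Ioi 0) :=
    (integrable_exp_neg_mul_sq hb).integrableOn
  have hfintIic : IntegrableOn (fun u : ℝ => Real.exp (-b * u ^ 2)) (Set.Iic 0) :=
    (integrable_exp_neg_mul_sq hb).integrableOn
  have hrk : Tendsto (fun r : ℝ => r * k) atTop atTop := tendsto_id.atTop_mul_const hk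
  have t1 : Tendsto (fun r : ℝ => Φ (r * k)) atTop
      (𝓝 (∫ x in Set.Ioi (0 : ℝ), Real.exp (-b * x ^ 2))) :=
    intervalIntegral_tendsto_integral_Ioi 0 hfint hrk
  have t2 : Tendsto (fun r : ℝ => Φ (-(r * k))) atTop
      (𝓝 (-∫ x in Set.Iic (0 : ℝ), Real.exp (-b * x ^ 2))) := by
    have hneg : Tendsto (fun r : ℝ => -(r * k)) atTop atBot := tendsto_neg_atTop_atBot.comp hrk
    have := (intervalIntegral_tendsto_integral_Iic 0 hfintIic hneg).neg
    apply this.congr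
    intro r
    rw [← intervalIntegral.integral_symm]
  have tE : Tendsto (fun r : ℝ => Real.exp (-b * r ^ 2)) atTop (𝓝 0) := by
    have h1 : Tendsto (fun r : ℝ => b * r ^ 2) atTop atTop :=
      (tendsto_pow_atTop (two_ne_zero)).const_mul_atTop hb
    have h2 : Tendsto (fun r : ℝ => -b * r ^ 2) atTop atBot := by
      exact (tendsto_neg_atTop_atBot.comp h1).congr (fun r => by simp [Function.comp])
    exact Real.tendsto_exp_atBot.comp h2
  have tΨ : Tendsto Ψ atTop (𝓝 (∫ x in Set.Ioi (0 : ℝ),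
      Real.exp (-(b * (1 + k ^ 2)) * x ^ 2))) :=
    intervalIntegral_tendsto_integral_Ioi 0 hgint tendsto_id
  have hI : (∫ x in Set.Ioi (0 : ℝ), Real.exp (-(b * (1 + k ^ 2)) * x ^ 2))
      = Real.sqrt (π / (b * (1 + k ^ 2))) / 2 := integral_gaussian_Ioi _
  have tF : Tendsto F atTop (𝓝 (k / b * (Real.sqrt (π / (b * (1 + k ^ 2))) / 2))) := by
    have first : Tendsto (fun r : ℝ =>
        -(1 / (2 * b)) * (Real.exp (-b * r ^ 2) * (Φ (r * k) - Φ (-(r * k))))) atTop (𝓝 0) := by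
      have := (tE.mul (t1.sub t2)).const_mul (-(1 / (2 * b)))
      simpa using this
    have second := tΨ.const_mul (k / b)
    have h := first.add second
    rw [hI] at h
    rw [show k / b * (√(π / (b * (1 + k ^ 2))) / 2)
      = 0 + k / b * (√(π / (b * (1 + k ^ 2))) / 2) by ring]
    exact h
  have key := integral_Ioi_of_hasDerivAt_of_tendsto' (fun x _ => hFderiv x) hint tF
  have hF0 : F 0 = 0 := by simp [hF_def, hΦ_def, hΨ_def]
  rw [hF0, sub_zero] at key
  rw [← key]
  exact setIntegral_congr_fun measurableSet_Ioi (fun r _ => by rw [hΦtot r])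




lemma integral_abs_cos_two_pi : (∫ φ in (0 : ℝ)..(2 * π), |Real.cos φ|) = 4 := by
  have hpi := Real.pi_pos
  have hi : ∀ a b : ℝ, IntervalIntegrable (fun φ => |Real.cos φ|) volume a b := fun a b =>
    (Real.continuous_cos.abs).intervalIntegrable a b
  have s1 : (∫ φ in (0 : ℝ)..(π / 2), |Real.cos φ|) = 1 := by
    rw [intervalIntegral.integral_congr (g := Real.cos) ?_, integral_cos]
    · simp
    · intro φ hφ
      rw [Set.uIcc_of_le (by linarith)] at hφ
      exact abs_of_nonneg (Real.cos_nonneg_of_mem_Icc ⟨by linarith [hφ.1], hφ.2⟩)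
  have s2 : (∫ φ in (π / 2)..(π + π / 2), |Real.cos φ|) = 2 := by
    rw [intervalIntegral.integral_congr (g := fun φ => -Real.cos φ) ?_]
    · rw [intervalIntegral.integral_neg, integral_cos]
      rw [Real.sin_pi_div_two, show π + π / 2 = π / 2 + π by ring, Real.sin_add_pi,
        Real.sin_pi_div_two]
      norm_num
    · intro φ hφ
      rw [Set.uIcc_of_le (by linarith)] at hφ
      exact abs_of_nonpos (Real.cos_nonpos_of_pi_div_two_le_of_le hφ.1 hφ.2)
  have s3 : (∫ φ in (π + π / 2)..(2 * π), |Real.cos φ|) = 1 := by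
    rw [intervalIntegral.integral_congr (g := Real.cos) ?_, integral_cos]
    · rw [Real.sin_two_pi, show π + π / 2 = π / 2 + π by ring, Real.sin_add_pi,
        Real.sin_pi_div_two]
      norm_num
    · intro φ hφ
      rw [Set.uIcc_of_le (by linarith)] at hφ
      have h1 : Real.cos φ = Real.cos (φ - 2 * π) := (Real.cos_sub_two_pi φ).symm
      have h2 : (0 : ℝ) ≤ Real.cos (φ - 2 * π) := by
        apply Real.cos_nonneg_of_mem_Icc
        constructor
        · linarith [hφ.1]
        · linarith [hφ.2]
      show |Real.cos φ| = Real.cos φ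
      rw [h1]
      exact abs_of_nonneg h2
  rw [← intervalIntegral.integral_add_adjacent_intervals (b := π + π / 2) ?_ (hi _ _),
    ← intervalIntegral.integral_add_adjacent_intervals (a := (0:ℝ)) (b := π / 2)
      (c := π + π / 2) (hi _ _) (hi _ _), s1, s2, s3]
  · norm_num
  · exact (hi 0 (π / 2)).trans (hi (π / 2) (π + π / 2))

/-- The triple integral whose value yields the Palm distribution
`P(Θ ∈ (t, π)) = (1/2) cos (t/2)` of the Delaunay angle seen from line
crossings of a planar Poisson–Voronoi tessellation. When `cos φ = 0`, the
inner integral runs over the degenerate interval `[0, 0]` and hence is `0`. -/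
theorem triple_integral_angle (lam t : ℝ) (hlam : 0 < lam)
    (ht : t ∈ Set.Ioo (0 : ℝ) π) :
    (∫ φ in (0 : ℝ)..(2 * π),
      ∫ r in Set.Ioi (0 : ℝ),
        r * Real.exp (-(lam * π * r ^ 2) / 4) *
          ∫ z in (-(r * |Real.cos φ| * (Real.cos (t / 2) / Real.sin (t / 2))))..
              (r * |Real.cos φ| * (Real.cos (t / 2) / Real.sin (t / 2))),
            Real.exp (-(lam * π * z ^ 2) / (4 * Real.cos φ ^ 2))) =
    16 / (π * lam ^ ((3 : ℝ) / 2)) * Real.cos (t / 2) := by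
  obtain ⟨ht0, htπ⟩ := ht
  have hpi := Real.pi_pos
  have hs : 0 < Real.sin (t / 2) := Real.sin_pos_of_pos_of_lt_pi (by linarith) (by linarith)
  have hcos : 0 < Real.cos (t / 2) := Real.cos_pos_of_mem_Ioo ⟨by linarith, by linarith⟩
  set k := Real.cos (t / 2) / Real.sin (t / 2) with hk_def
  have hk : 0 < k := div_pos hcos hs
  set b := lam * π / 4 with hb_def
  have hb : 0 < b := by positivity
  set M := k / b * (Real.sqrt (π / (b * (1 + k ^ 2))) / 2) with hM_def
  have hmid : ∀ φ : ℝ,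
      (∫ r in Set.Ioi (0 : ℝ), r * Real.exp (-(lam * π * r ^ 2) / 4) *
        ∫ z in (-(r * |Real.cos φ| * k))..(r * |Real.cos φ| * k),
          Real.exp (-(lam * π * z ^ 2) / (4 * Real.cos φ ^ 2)))
      = |Real.cos φ| * M := by
    intro φ
    have hinner : ∀ r : ℝ,
        (∫ z in (-(r * |Real.cos φ| * k))..(r * |Real.cos φ| * k),
          Real.exp (-(lam * π * z ^ 2) / (4 * Real.cos φ ^ 2)))
        = |Real.cos φ| * ∫ u in (-(r * k))..(r * k), Real.exp (-b * u ^ 2) := by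
      intro r
      rcases eq_or_ne (Real.cos φ) 0 with h0 | h0
      · simp [h0]
      · have hd : |Real.cos φ| ≠ 0 := abs_ne_zero.mpr h0
        have hzz : ∀ z : ℝ, Real.exp (-(lam * π * z ^ 2) / (4 * Real.cos φ ^ 2))
            = (fun u : ℝ => Real.exp (-b * u ^ 2)) (z / |Real.cos φ|) := by
          intro z
          simp only
          congr 1
          rw [div_pow, sq_abs, hb_def]
          field_simp
        calc (∫ z in (-(r * |Real.cos φ| * k))..(r * |Real.cos φ| * k),
              Real.exp (-(lam * π * z ^ 2) / (4 * Real.cos φ ^ 2)))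
            = ∫ z in (-(r * |Real.cos φ| * k))..(r * |Real.cos φ| * k),
              (fun u : ℝ => Real.exp (-b * u ^ 2)) (z / |Real.cos φ|) :=
              intervalIntegral.integral_congr fun z _ => hzz z
          _ = |Real.cos φ| • ∫ u in ((-(r * |Real.cos φ| * k)) / |Real.cos φ|)..
                ((r * |Real.cos φ| * k) / |Real.cos φ|), Real.exp (-b * u ^ 2) :=
              intervalIntegral.integral_comp_div (fun u : ℝ => Real.exp (-b * u ^ 2)) hd
          _ = |Real.cos φ| * ∫ u in (-(r * k))..(r * k), Real.exp (-b * u ^ 2) := by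
              have hb1 : (-(r * |Real.cos φ| * k)) / |Real.cos φ| = -(r * k) := by
                field_simp
              have hb2 : (r * |Real.cos φ| * k) / |Real.cos φ| = r * k := by
                field_simp
              rw [smul_eq_mul, hb1, hb2]
    have hpt : ∀ r : ℝ, r * Real.exp (-(lam * π * r ^ 2) / 4) *
        (∫ z in (-(r * |Real.cos φ| * k))..(r * |Real.cos φ| * k),
          Real.exp (-(lam * π * z ^ 2) / (4 * Real.cos φ ^ 2)))
        = |Real.cos φ| * (r * Real.exp (-b * r ^ 2) *
          ∫ u in (-(r * k))..(r * k), Real.exp (-b * u ^ 2)) := by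
      intro r
      rw [hinner r, show -(lam * π * r ^ 2) / 4 = -b * r ^ 2 by rw [hb_def]; ring]
      ring
    rw [setIntegral_congr_fun measurableSet_Ioi fun r _ => hpt r, integral_const_mul,
      gauss_middle b k hb hk]
  rw [intervalIntegral.integral_congr fun φ _ => hmid φ, intervalIntegral.integral_mul_const,
    integral_abs_cos_two_pi]
  -- arithmetic
  have h1k : 1 + k ^ 2 = 1 / Real.sin (t / 2) ^ 2 := by
    rw [hk_def, div_pow]
    field_simp
    exact Real.sin_sq_add_cos_sq _
  have h2 : π / (b * (1 + k ^ 2)) = Real.sin (t / 2) ^ 2 * (4 / lam) := by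
    rw [h1k, hb_def]
    field_simp
  have h4 : Real.sqrt (4 / lam) = 2 / Real.sqrt lam := by
    rw [Real.sqrt_div (by norm_num : (0:ℝ) ≤ 4) lam, show (4:ℝ) = 2 ^ 2 by norm_num,
      Real.sqrt_sq (by norm_num : (0:ℝ) ≤ 2)]
  have hpow : lam ^ ((3 : ℝ) / 2) = lam * Real.sqrt lam := by
    rw [show (3:ℝ)/2 = 1 + 1/2 by norm_num, Real.rpow_add hlam, Real.rpow_one,
      ← Real.sqrt_eq_rpow]
  have hsl : Real.sqrt lam ≠ 0 := (Real.sqrt_pos.mpr hlam).ne'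
  have hsql : Real.sqrt lam * Real.sqrt lam = lam := Real.mul_self_sqrt hlam.le
  rw [hM_def, h2, Real.sqrt_mul (sq_nonneg _), Real.sqrt_sq hs.le, h4, hk_def, hb_def, hpow]
  field_simp
  ring_nf
end

section
/- For all real numbers a > 0, A > 0 and t ∈ (0, π), ∫₀^∞ r² ( ∫₀^{(r/a) cot(t/2)} ρ · exp( −(A/8) (a² ρ² + r²)^{3/2} ) dρ ) dr = (32 Γ(5/3) / (9 a² A^{5/3})) · (1 − sin³(t/2)), where cot(t/2) = cos(t/2)/sin(t/2) and Γ is the Gamma function. -/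
open Real MeasureTheory

open Set Filter


noncomputable def gg (c u : ℝ) : ℝ := Real.exp (-c * u ^ ((3:ℝ)/2))

noncomputable def KK (c x : ℝ) : ℝ := ∫ u in Set.Ioi x, gg c u

lemma gg_cont (c : ℝ) : Continuous (gg c) :=
  Real.continuous_exp.comp (continuous_const.mul (Real.continuous_rpow_const (by norm_num)))

lemma gg_nonneg (c u : ℝ) : 0 ≤ gg c u := Real.exp_nonneg _

lemma gg_integrableOn {c : ℝ} (hc : 0 < c) {x : ℝ} (hx : 0 ≤ x) :
    IntegrableOn (gg c) (Set.Ioi x) := by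
  have h0 : IntegrableOn (gg c) (Set.Ioi 0) := by
    have := integrableOn_rpow_mul_exp_neg_mul_rpow (p := 3/2) (s := 0) (b := c)
      (by norm_num) (by norm_num) hc
    refine this.congr_fun (fun u hu => ?_) measurableSet_Ioi
    simp [gg, Real.rpow_zero]
  exact h0.mono_set (Set.Ioi_subset_Ioi hx)

lemma KK_nonneg (c x : ℝ) : 0 ≤ KK c x :=
  setIntegral_nonneg measurableSet_Ioi fun u _ => gg_nonneg c u

lemma KK_antitone_on {c : ℝ} (hc : 0 < c) {x y : ℝ} (hx : 0 ≤ x) (hxy : x ≤ y) :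
    KK c y ≤ KK c x := by
  refine setIntegral_mono_set (gg_integrableOn hc hx) ?_ ?_
  · exact Eventually.of_forall fun u => gg_nonneg c u
  · exact HasSubset.Subset.eventuallyLE (Set.Ioi_subset_Ioi hxy)

lemma KK_sub {c : ℝ} (hc : 0 < c) {p q : ℝ} (hp : 0 < p) (hpq : p ≤ q) :
    ∫ u in p..q, gg c u = KK c p - KK c q := by
  have hq : 0 < q := lt_of_lt_of_le hp hpq
  have hsplit : KK c p = (∫ u in Set.Ioc p q, gg c u) + KK c q := by
    rw [KK, ← Set.Ioc_union_Ioi_eq_Ioi hpq]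
    exact setIntegral_union (Set.Ioc_disjoint_Ioi le_rfl) measurableSet_Ioi
      ((gg_integrableOn hc hp.le).mono_set Set.Ioc_subset_Ioi_self)
      (gg_integrableOn hc hq.le)
  rw [intervalIntegral.integral_of_le hpq]
  linarith

lemma KK_eq_of_pos {c : ℝ} (hc : 0 < c) {x : ℝ} (hx : 0 < x) :
    KK c x = KK c 1 - ∫ u in (1:ℝ)..x, gg c u := by
  rcases le_total x 1 with h | h
  · rw [intervalIntegral.integral_symm x 1, KK_sub hc hx h]; ring
  · rw [KK_sub hc one_pos h]; ring

lemma KK_hasDerivAt {c : ℝ} (hc : 0 < c) {x : ℝ} (hx : 0 < x) :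
    HasDerivAt (KK c) (-(gg c x)) x := by
  have h1 : HasDerivAt (fun y => KK c 1 - ∫ u in (1:ℝ)..y, gg c u) (-(gg c x)) x := by
    have : HasDerivAt (fun y => ∫ u in (1:ℝ)..y, gg c u) (gg c x) x :=
      intervalIntegral.integral_hasDerivAt_right ((gg_cont c).intervalIntegrable _ _)
        ((gg_cont c).stronglyMeasurableAtFilter _ _) (gg_cont c).continuousAt
    exact ((hasDerivAt_const x (KK c 1)).sub this).congr_deriv (by ring)
  refine h1.congr_of_eventuallyEq ?_
  filter_upwards [Ioi_mem_nhds hx] with y hy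
  exact KK_eq_of_pos hc hy

lemma integral_exp_neg_mul_Ioi {k : ℝ} (hk : 0 < k) (b : ℝ) :
    ∫ u in Set.Ioi b, Real.exp (-k * u) = Real.exp (-k * b) / k := by
  have h := integral_comp_mul_left_Ioi (fun x => Real.exp (-x)) b hk
  rw [integral_exp_neg_Ioi] at h
  simpa [neg_mul, smul_eq_mul, div_eq_inv_mul] using h

lemma KK_continuousOn {c : ℝ} (hc : 0 < c) : ContinuousOn (KK c) (Set.Ioi (0:ℝ)) :=
  fun _ hx => (KK_hasDerivAt hc hx).continuousAt.continuousWithinAt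

lemma KK_bound {c : ℝ} (hc : 0 < c) {x : ℝ} (hx : 0 < x) :
    KK c (x ^ 2) ≤ Real.exp (-c * x ^ 3) / (c * x) := by
  have hcx : 0 < c * x := mul_pos hc hx
  have hexp : IntegrableOn (fun u => Real.exp (-(c * x) * u)) (Set.Ioi (x ^ 2)) := by
    have := exp_neg_integrableOn_Ioi (a := x ^ 2) (b := c * x) hcx
    simpa [neg_mul, mul_comm] using this
  have hle : ∀ u ∈ Set.Ioi (x ^ 2), gg c u ≤ Real.exp (-(c * x) * u) := by
    intro u hu
    have hu2 : (0:ℝ) < x ^ 2 := by positivity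
    have hu0 : 0 < u := lt_trans hu2 hu
    have h32 : u ^ ((3:ℝ)/2) = u ^ (1:ℝ) * u ^ ((1:ℝ)/2) := by
      rw [← Real.rpow_add hu0]; norm_num
    rw [Real.rpow_one] at h32
    have hsq : x ≤ u ^ ((1:ℝ)/2) := by
      have h2 : (x ^ 2 : ℝ) ^ ((1:ℝ)/2) ≤ u ^ ((1:ℝ)/2) :=
        Real.rpow_le_rpow (by positivity) (le_of_lt hu) (by norm_num)
      rwa [← Real.rpow_natCast x 2, ← Real.rpow_mul hx.le, show ((2:ℕ):ℝ) * (1/2) = 1 by norm_num,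
        Real.rpow_one] at h2
    have hmul : x * u ≤ u ^ ((3:ℝ)/2) := by
      rw [h32]; nlinarith
    exact Real.exp_le_exp.2 (by nlinarith)
  calc KK c (x ^ 2) ≤ ∫ u in Set.Ioi (x ^ 2), Real.exp (-(c * x) * u) :=
        setIntegral_mono_on (gg_integrableOn hc (by positivity)) hexp measurableSet_Ioi hle
  _ = Real.exp (-(c * x) * x ^ 2) / (c * x) := integral_exp_neg_mul_Ioi hcx _
  _ = Real.exp (-c * x ^ 3) / (c * x) := by ring_nf

lemma HH_integrable {c : ℝ} (hc : 0 < c) :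
    IntegrableOn (fun r => r ^ 2 * KK c (r ^ 2)) (Set.Ioi (0:ℝ)) := by
  have hdom : IntegrableOn (fun r : ℝ => c⁻¹ * (r * Real.exp (-c * r ^ 3))) (Set.Ioi 0) := by
    refine Integrable.const_mul ?_ _
    have := integrableOn_rpow_mul_exp_neg_mul_rpow (p := 3) (s := 1) (b := c)
      (by norm_num) (by norm_num) hc
    refine this.congr_fun (fun r hr => ?_) measurableSet_Ioi
    beta_reduce
    rw [show (1:ℝ) = ((1:ℕ):ℝ) by norm_num, Real.rpow_natCast,
      show (3:ℝ) = ((3:ℕ):ℝ) by norm_num, Real.rpow_natCast]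
    norm_num
  have hmeas : AEStronglyMeasurable (fun r => r ^ 2 * KK c (r ^ 2))
      (volume.restrict (Set.Ioi (0:ℝ))) := by
    have hcont : ContinuousOn (fun r => r ^ 2 * KK c (r ^ 2)) (Set.Ioi (0:ℝ)) := by
      refine ContinuousOn.mul (by fun_prop) ?_
      exact (KK_continuousOn hc).comp (by fun_prop) (fun r hr => show (0:ℝ) < r ^ 2 from pow_pos hr 2)
    exact hcont.aestronglyMeasurable measurableSet_Ioi
  refine Integrable.mono' hdom hmeas ?_
  filter_upwards [ae_restrict_mem measurableSet_Ioi] with r hr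
  have hr0 : (0:ℝ) < r := hr
  rw [Real.norm_eq_abs, abs_of_nonneg (mul_nonneg (by positivity) (KK_nonneg c _))]
  calc r ^ 2 * KK c (r ^ 2) ≤ r ^ 2 * (Real.exp (-c * r ^ 3) / (c * r)) :=
        mul_le_mul_of_nonneg_left (KK_bound hc hr0) (by positivity)
  _ = c⁻¹ * (r * Real.exp (-c * r ^ 3)) := by field_simp

lemma gg_sq {c x : ℝ} (hx : 0 ≤ x) : gg c (x ^ 2) = Real.exp (-c * x ^ 3) := by
  rw [gg, ← Real.rpow_natCast x 2, ← Real.rpow_mul hx, show ((2:ℕ):ℝ) * (3/2) = ((3:ℕ):ℝ) by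
    norm_num, Real.rpow_natCast]

lemma I4_integrable {c : ℝ} (hc : 0 < c) :
    IntegrableOn (fun r : ℝ => r ^ 4 * Real.exp (-c * r ^ 3)) (Set.Ioi (0:ℝ)) := by
  have := integrableOn_rpow_mul_exp_neg_mul_rpow (p := 3) (s := 4) (b := c)
    (by norm_num) (by norm_num) hc
  refine this.congr_fun (fun r hr => ?_) measurableSet_Ioi
  beta_reduce
  rw [show (4:ℝ) = ((4:ℕ):ℝ) by norm_num, Real.rpow_natCast,
    show (3:ℝ) = ((3:ℕ):ℝ) by norm_num, Real.rpow_natCast]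

lemma I4_eq {c : ℝ} (hc : 0 < c) :
    ∫ r in Set.Ioi (0:ℝ), r ^ 4 * Real.exp (-c * r ^ 3) =
      c ^ (-(5:ℝ)/3) * (1/3) * Real.Gamma (5/3) := by
  have h := integral_rpow_mul_exp_neg_mul_rpow (p := 3) (q := 4) (b := c)
    (by norm_num) (by norm_num) hc
  rw [show (-((4:ℝ)+1)/3) = (-(5:ℝ)/3) by norm_num, show (((4:ℝ)+1)/3) = ((5:ℝ)/3) by norm_num]
    at h
  rw [← h]
  refine setIntegral_congr_fun measurableSet_Ioi (fun r hr => ?_)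
  rw [show (4:ℝ) = ((4:ℕ):ℝ) by norm_num, Real.rpow_natCast,
    show (3:ℝ) = ((3:ℕ):ℝ) by norm_num, Real.rpow_natCast]

lemma M_eq {c : ℝ} (hc : 0 < c) :
    ∫ r in Set.Ioi (0:ℝ), r ^ 2 * KK c (r ^ 2) =
      (2/3) * ∫ r in Set.Ioi (0:ℝ), r ^ 4 * Real.exp (-c * r ^ 3) := by
  set φ : ℝ → ℝ := fun r => (1/3) * r ^ 3 * KK c (r ^ 2) with hφ
  set φ' : ℝ → ℝ := fun r => r ^ 2 * KK c (r ^ 2) - (2/3) * r ^ 4 * Real.exp (-c * r ^ 3) with hφ'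
  have hderiv : ∀ x ∈ Set.Ioi (0:ℝ), HasDerivAt φ (φ' x) x := by
    intro x hx
    have hx0 : (0:ℝ) < x := hx
    have h1 : HasDerivAt (fun y : ℝ => y ^ 2) (2 * x) x := by
      simpa using hasDerivAt_pow 2 x
    have hK : HasDerivAt (fun y : ℝ => KK c (y ^ 2)) (-(gg c (x ^ 2)) * (2 * x)) x := by
      have := HasDerivAt.comp (h := fun y : ℝ => y ^ 2)
        (hh₂ := KK_hasDerivAt hc (pow_pos hx0 2)) (hh := h1)
      exact this.congr_deriv (by ring)
    have hcube : HasDerivAt (fun y : ℝ => (1/3) * y ^ 3) (x ^ 2) x := by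
      have := (hasDerivAt_pow 3 x).const_mul (1/3 : ℝ)
      simpa using this.congr_deriv (by push_cast; ring)
    have := hcube.mul hK
    refine this.congr_deriv ?_
    rw [hφ', gg_sq hx0.le]
    ring
  have hcont : ContinuousWithinAt φ (Set.Ici (0:ℝ)) 0 := by
    unfold φ
    unfold ContinuousWithinAt
    rw [show ((fun r : ℝ => 1 / 3 * r ^ 3 * KK c (r ^ 2)) 0) = 0 from by norm_num]
    have hb : Tendsto (fun r : ℝ => (1/3) * r ^ 3 * KK c 0) (nhdsWithin 0 (Set.Ici 0))
        (nhds 0) := by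
      have h2 : Continuous (fun r : ℝ => (1/3) * r ^ 3 * KK c 0) :=
        (continuous_const.mul (continuous_pow 3)).mul continuous_const
      have h2 := h2.tendsto 0
      simpa using h2.mono_left nhdsWithin_le_nhds
    refine squeeze_zero' ?_ ?_ hb
    · filter_upwards [self_mem_nhdsWithin] with r hr
      have hr0 : (0:ℝ) ≤ r := hr
      exact mul_nonneg (by positivity) (KK_nonneg _ _)
    · filter_upwards [self_mem_nhdsWithin] with r hr
      have hr0 : (0:ℝ) ≤ r := hr
      have hK := KK_antitone_on hc le_rfl (by positivity : (0:ℝ) ≤ r ^ 2)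
      have : (0:ℝ) ≤ (1/3) * r ^ 3 := by positivity
      nlinarith
  have htop : Tendsto φ atTop (nhds 0) := by
    have hb : Tendsto (fun r : ℝ => (1/(3*c)) * (r ^ 2 * Real.exp (-c * r ^ 3))) atTop
        (nhds 0) := by
      have h1 : Tendsto (fun y : ℝ => y ^ ((2:ℝ)/3) * Real.exp (-c * y)) atTop (nhds 0) :=
        tendsto_rpow_mul_exp_neg_mul_atTop_nhds_zero _ c hc
      have h2 : Tendsto (fun r : ℝ => r ^ 3) atTop atTop :=
        tendsto_pow_atTop (by norm_num)
      have h3 := h1.comp h2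
      have h4 : (fun r : ℝ => (r ^ 3) ^ ((2:ℝ)/3) * Real.exp (-c * r ^ 3)) =ᶠ[atTop]
          (fun r : ℝ => r ^ 2 * Real.exp (-c * r ^ 3)) := by
        filter_upwards [eventually_ge_atTop (0:ℝ)] with r hr
        rw [← Real.rpow_natCast r 3, ← Real.rpow_mul hr,
          show ((3:ℕ):ℝ) * (2/3) = ((2:ℕ):ℝ) by norm_num, Real.rpow_natCast]
      have h5 : Tendsto (fun r : ℝ => r ^ 2 * Real.exp (-c * r ^ 3)) atTop (nhds 0) :=
        Tendsto.congr' h4 h3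
      simpa using h5.const_mul (1/(3*c))
    refine squeeze_zero' ?_ ?_ hb
    · filter_upwards [eventually_ge_atTop (0:ℝ)] with r hr
      exact mul_nonneg (by positivity) (KK_nonneg _ _)
    · filter_upwards [eventually_gt_atTop (0:ℝ)] with r hr
      have hK := KK_bound hc hr
      have h6 : (1/3 : ℝ) * r ^ 3 * KK c (r ^ 2) ≤ (1/3) * r ^ 3 * (Real.exp (-c * r ^ 3) / (c * r)) :=
        mul_le_mul_of_nonneg_left hK (by positivity)
      calc φ r ≤ (1/3 : ℝ) * r ^ 3 * (Real.exp (-c * r ^ 3) / (c * r)) := h6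
      _ = (1/(3*c)) * (r ^ 2 * Real.exp (-c * r ^ 3)) := by field_simp
  have hint : IntegrableOn φ' (Set.Ioi (0:ℝ)) := by
    rw [hφ']
    exact (HH_integrable hc).sub (IntegrableOn.congr_fun ((I4_integrable hc).const_mul (2/3))
      (fun r hr => by ring) measurableSet_Ioi)
  have hFTC := integral_Ioi_of_hasDerivAt_of_tendsto hcont hderiv hint htop
  rw [show φ 0 = 0 by simp [hφ], sub_zero] at hFTC
  have hsplit : ∫ x in Set.Ioi (0:ℝ), φ' x =
      (∫ r in Set.Ioi (0:ℝ), r ^ 2 * KK c (r ^ 2)) -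
        ∫ r in Set.Ioi (0:ℝ), (2/3) * r ^ 4 * Real.exp (-c * r ^ 3) := by
    rw [hφ']
    exact integral_sub (HH_integrable hc) (IntegrableOn.congr_fun
      ((I4_integrable hc).const_mul (2/3)) (fun r hr => by ring) measurableSet_Ioi)
  rw [hFTC] at hsplit
  have h7 : ∫ r in Set.Ioi (0:ℝ), (2/3) * r ^ 4 * Real.exp (-c * r ^ 3) =
      (2/3) * ∫ r in Set.Ioi (0:ℝ), r ^ 4 * Real.exp (-c * r ^ 3) := by
    rw [← integral_const_mul]
    exact setIntegral_congr_fun measurableSet_Ioi fun r hr => by ring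
  linarith [hsplit, h7]

lemma inner_eq {c aa : ℝ} (ha : 0 < aa) (r b : ℝ) :
    ∫ ρ in (0:ℝ)..b, ρ * Real.exp (-c * (aa ^ 2 * ρ ^ 2 + r ^ 2) ^ ((3:ℝ)/2)) =
      (2 * aa ^ 2)⁻¹ * ∫ u in (r ^ 2)..(aa ^ 2 * b ^ 2 + r ^ 2), gg c u := by
  have hsub := intervalIntegral.integral_comp_smul_deriv
    (f := fun ρ : ℝ => aa ^ 2 * ρ ^ 2 + r ^ 2) (f' := fun ρ : ℝ => 2 * aa ^ 2 * ρ)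
    (g := gg c) (a := 0) (b := b)
    (fun x _ => by
      have := ((hasDerivAt_pow 2 x).const_mul (aa ^ 2)).add_const (r ^ 2)
      exact this.congr_deriv (by push_cast; ring))
    (by fun_prop) (gg_cont c)
  rw [show aa ^ 2 * 0 ^ 2 + r ^ 2 = r ^ 2 by norm_num] at hsub
  rw [← hsub, ← intervalIntegral.integral_const_mul]
  refine intervalIntegral.integral_congr fun x _ => ?_
  have haa : aa ^ 2 ≠ 0 := by positivity
  simp only [Function.comp, smul_eq_mul, gg]
  field_simp


/-- The double integral arising in the computation of the Palm distribution of
the angle with which line crossings of the two-dimensional facets of a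
three-dimensional Poisson–Voronoi tessellation see the two nuclei. -/
theorem double_integral_3d (a A t : ℝ) (ha : 0 < a) (hA : 0 < A)
    (ht : t ∈ Set.Ioo (0 : ℝ) π) :
    (∫ r in Set.Ioi (0 : ℝ),
      r ^ 2 *
        ∫ ρ in (0 : ℝ)..(r / a * (Real.cos (t / 2) / Real.sin (t / 2))),
          ρ * Real.exp (-(A / 8) * (a ^ 2 * ρ ^ 2 + r ^ 2) ^ ((3 : ℝ) / 2))) =
    32 * Real.Gamma (5 / 3) / (9 * a ^ 2 * A ^ ((5 : ℝ) / 3)) *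
      (1 - Real.sin (t / 2) ^ 3) := by
  obtain ⟨ht0, htπ⟩ := ht
  set s := Real.sin (t / 2) with hs_def
  set cth := Real.cos (t / 2) with hcth_def
  have hs : 0 < s := Real.sin_pos_of_pos_of_lt_pi (by linarith) (by linarith [Real.pi_pos])
  have hs1 : s ≤ 1 := Real.sin_le_one _
  set c : ℝ := A / 8 with hcdef
  have hc : 0 < c := by positivity
  set M : ℝ := ∫ r in Set.Ioi (0:ℝ), r ^ 2 * KK c (r ^ 2) with hM_def
  -- Step A : pointwise identity
  have hA1 : ∀ r ∈ Set.Ioi (0:ℝ),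
      r ^ 2 * (∫ ρ in (0:ℝ)..(r / a * (cth / s)),
          ρ * Real.exp (-c * (a ^ 2 * ρ ^ 2 + r ^ 2) ^ ((3:ℝ)/2)))
        = (2 * a ^ 2)⁻¹ * (r ^ 2 * KK c (r ^ 2) - r ^ 2 * KK c ((s⁻¹ * r) ^ 2)) := by
    intro r hr
    have hr0 : (0:ℝ) < r := hr
    have hpyth : s ^ 2 + cth ^ 2 = 1 := Real.sin_sq_add_cos_sq _
    have harg : a ^ 2 * (r / a * (cth / s)) ^ 2 + r ^ 2 = (s⁻¹ * r) ^ 2 := by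
      field_simp
      linear_combination hpyth
    have hle : r ^ 2 ≤ (s⁻¹ * r) ^ 2 := by
      have h2 : (s⁻¹ * r) ^ 2 = r ^ 2 / s ^ 2 := by field_simp
      rw [h2, le_div_iff₀ (by positivity)]
      nlinarith
    rw [inner_eq ha r _, harg, KK_sub hc (pow_pos hr0 2) hle]
    ring
  -- Step B : integrability of the scaled term
  have hH2base : IntegrableOn (fun r : ℝ => (s⁻¹ * r) ^ 2 * KK c ((s⁻¹ * r) ^ 2))
      (Set.Ioi (0:ℝ)) := by
    refine (integrableOn_Ioi_comp_mul_left_iff (fun x : ℝ => x ^ 2 * KK c (x ^ 2)) 0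
      (inv_pos.2 hs)).mpr ?_
    rw [mul_zero]
    exact HH_integrable hc
  have hH2eq : ∀ r ∈ Set.Ioi (0:ℝ),
      s ^ 2 * ((s⁻¹ * r) ^ 2 * KK c ((s⁻¹ * r) ^ 2)) = r ^ 2 * KK c ((s⁻¹ * r) ^ 2) := by
    intro r _
    rw [← mul_assoc, show s ^ 2 * (s⁻¹ * r) ^ 2 = r ^ 2 by field_simp]
  have hH2int : IntegrableOn (fun r : ℝ => r ^ 2 * KK c ((s⁻¹ * r) ^ 2)) (Set.Ioi (0:ℝ)) :=
    IntegrableOn.congr_fun (hH2base.const_mul (s ^ 2)) hH2eq measurableSet_Ioi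
  -- Step C : scaling
  have hN : ∫ r in Set.Ioi (0:ℝ), r ^ 2 * KK c ((s⁻¹ * r) ^ 2) = s ^ 3 * M := by
    rw [← setIntegral_congr_fun measurableSet_Ioi hH2eq, integral_const_mul,
      integral_comp_mul_left_Ioi (fun x : ℝ => x ^ 2 * KK c (x ^ 2)) 0 (inv_pos.2 hs),
      inv_inv, mul_zero, smul_eq_mul, ← hM_def]
    ring
  -- Step D : the value of M
  have hM : M = (2/3) * (c ^ (-(5:ℝ)/3) * (1/3) * Real.Gamma (5/3)) := by
    rw [hM_def, M_eq hc, I4_eq hc]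
  -- assemble
  calc (∫ r in Set.Ioi (0 : ℝ), r ^ 2 *
        ∫ ρ in (0 : ℝ)..(r / a * (cth / s)),
          ρ * Real.exp (-c * (a ^ 2 * ρ ^ 2 + r ^ 2) ^ ((3 : ℝ) / 2)))
      = ∫ r in Set.Ioi (0:ℝ),
          (2 * a ^ 2)⁻¹ * (r ^ 2 * KK c (r ^ 2) - r ^ 2 * KK c ((s⁻¹ * r) ^ 2)) :=
        setIntegral_congr_fun measurableSet_Ioi hA1
    _ = (2 * a ^ 2)⁻¹ * (M - s ^ 3 * M) := by
        rw [integral_const_mul, integral_sub (HH_integrable hc) hH2int, ← hM_def, hN]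
    _ = 32 * Real.Gamma (5 / 3) / (9 * a ^ 2 * A ^ ((5 : ℝ) / 3)) * (1 - s ^ 3) := by
        have h8 : (8:ℝ) ^ ((5:ℝ)/3) = 32 := by
          rw [show (8:ℝ) = (2:ℝ) ^ (3:ℕ) by norm_num, ← Real.rpow_natCast (2:ℝ) 3,
            ← Real.rpow_mul (by norm_num : (0:ℝ) ≤ 2),
            show ((3:ℕ):ℝ) * (5/3) = ((5:ℕ):ℝ) by norm_num, Real.rpow_natCast]
          norm_num
        have hc53 : c ^ (-(5:ℝ)/3) = 32 / A ^ ((5:ℝ)/3) := by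
          rw [hcdef, Real.div_rpow hA.le (by norm_num : (0:ℝ) ≤ 8), neg_div,
            Real.rpow_neg hA.le, Real.rpow_neg (by norm_num : (0:ℝ) ≤ 8), h8]
          field_simp
        have hP : (0:ℝ) < A ^ ((5:ℝ)/3) := Real.rpow_pos_of_pos hA _
        rw [hM, hc53]
        field_simp
        ring
end

section
/- Let ψ ∈ (0, π) and φ' be real numbers with sin ψ · cos φ' ≠ 0. Then ∫₀^{2π} (sin² ψ · cos² φ') / (1 − (sin ψ · sin φ · sin φ' − cos ψ · cos φ)²) dφ = 2π · sin ψ · |cos φ'|. -/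
open Real MeasureTheory

lemma alg_aux (r s c : ℝ) (hr : 0 < r) (h1 : s^2 + c^2 = 1) :
    1 / (r^2 * s ^ 2 + c ^ 2) =
      1 / r * (1 + 1 / (1 + ((r - 1) * s * c / (c ^ 2 + r * s ^ 2)) ^ 2) *
        (((r - 1) * (c ^ 2 - s ^ 2) * (c ^ 2 + r * s ^ 2) -
            (r - 1) * s * c * (2 * (r - 1) * s * c)) / (c ^ 2 + r * s ^ 2) ^ 2)) := by
  have hv : 0 < c^2 + r*s^2 := by nlinarith [sq_nonneg s, sq_nonneg c, mul_nonneg hr.le (sq_nonneg s)]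
  have hX : 0 < c^2 + r^2*s^2 := by nlinarith [sq_nonneg s, sq_nonneg c, mul_nonneg (mul_pos hr hr).le (sq_nonneg s)]
  have e1 : 1 + ((r-1)*s*c/(c^2+r*s^2))^2 = (c^2 + r^2*s^2)/((c^2+r*s^2)^2) := by
    field_simp
    ring_nf
    linear_combination (c^2 + r^2*s^2) * h1
  rw [e1]
  have e2 : (1:ℝ) / ((c^2 + r^2*s^2)/((c^2+r*s^2)^2)) *
      (((r - 1) * (c ^ 2 - s ^ 2) * (c ^ 2 + r * s ^ 2) -
        (r - 1) * s * c * (2 * (r - 1) * s * c)) / (c ^ 2 + r * s ^ 2) ^ 2)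
      = ((r-1)*(c^2 - r*s^2)) / (c^2 + r^2*s^2) := by
    rw [one_div_div]
    have hN : (r - 1) * (c ^ 2 - s ^ 2) * (c ^ 2 + r * s ^ 2) -
        (r - 1) * s * c * (2 * (r - 1) * s * c) = (r-1)*(c^2 - r*s^2) := by
      linear_combination ((r-1)*(c^2 - r*s^2)) * h1
    rw [hN]
    field_simp
  rw [e2]
  have hX' : (0:ℝ) < r^2*s^2+c^2 := by linarith
  field_simp [hX'.ne', hr.ne']
  ring_nf
  linear_combination (-(r*c^2 + r^3*s^2)) * h1

lemma core_integral (a : ℝ) (ha : 0 < a) :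
    ∫ x in (0:ℝ)..(2*π), 1 / (a * Real.sin x ^ 2 + Real.cos x ^ 2)
      = 2 * π / Real.sqrt a := by
  set r := Real.sqrt a with hrdef
  have hr0 : 0 < r := Real.sqrt_pos.2 ha
  have hra : r ^ 2 = a := Real.sq_sqrt ha.le
  have hv : ∀ x : ℝ, 0 < Real.cos x ^ 2 + r * Real.sin x ^ 2 := by
    intro x
    nlinarith [Real.sin_sq_add_cos_sq x, sq_nonneg (Real.sin x), sq_nonneg (Real.cos x),
      mul_nonneg hr0.le (sq_nonneg (Real.sin x))]
  have hd : ∀ x : ℝ, 0 < a * Real.sin x ^ 2 + Real.cos x ^ 2 := by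
    intro x
    nlinarith [Real.sin_sq_add_cos_sq x, sq_nonneg (Real.sin x), sq_nonneg (Real.cos x),
      mul_nonneg ha.le (sq_nonneg (Real.sin x))]
  set F : ℝ → ℝ := fun x => (1/r) * (x + Real.arctan
      ((r-1) * Real.sin x * Real.cos x / (Real.cos x ^ 2 + r * Real.sin x ^ 2))) with hFdef
  have hF : ∀ x ∈ Set.uIcc (0:ℝ) (2*π),
      HasDerivAt F (1 / (a * Real.sin x ^ 2 + Real.cos x ^ 2)) x := by
    intro x _
    have hs := Real.hasDerivAt_sin x
    have hc := Real.hasDerivAt_cos x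
    have hu : HasDerivAt (fun y => (r-1) * Real.sin y * Real.cos y)
        ((r-1) * (Real.cos x ^ 2 - Real.sin x ^ 2)) x := by
      have := (hs.const_mul (r-1)).mul hc
      exact this.congr_deriv (by ring)
    have hw : HasDerivAt (fun y => Real.cos y ^ 2 + r * Real.sin y ^ 2)
        (2 * (r-1) * Real.sin x * Real.cos x) x := by
      have := (hc.pow 2).add ((hs.pow 2).const_mul r)
      exact this.congr_deriv (by push_cast; ring)
    have hq := (hu.div hw (hv x).ne').arctan
    have := ((hasDerivAt_id x).add hq).const_mul (1/r)
    refine this.congr_deriv ?_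
    rw [← hra]
    exact (alg_aux r (Real.sin x) (Real.cos x) hr0 (Real.sin_sq_add_cos_sq x)).symm
  have hcont : IntervalIntegrable (fun x => 1 / (a * Real.sin x ^ 2 + Real.cos x ^ 2))
      volume (0:ℝ) (2*π) := by
    apply Continuous.intervalIntegrable
    exact continuous_const.div (by continuity) (fun x => (hd x).ne')
  rw [intervalIntegral.integral_eq_sub_of_hasDerivAt hF hcont]
  simp [hFdef, Real.sin_two_pi, Real.cos_two_pi]
  rw [inv_mul_eq_div]

/-- The angular integral arising in the spherical-coordinate computation of
the Palm angle distribution for line crossings of a three-dimensional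
Poisson–Voronoi tessellation. -/
theorem angular_integral (ψ φ' : ℝ) (hψ : ψ ∈ Set.Ioo (0 : ℝ) π)
    (h : Real.sin ψ * Real.cos φ' ≠ 0) :
    (∫ φ in (0 : ℝ)..(2 * π),
      Real.sin ψ ^ 2 * Real.cos φ' ^ 2 /
        (1 - (Real.sin ψ * Real.sin φ * Real.sin φ' -
          Real.cos ψ * Real.cos φ) ^ 2)) =
    2 * π * Real.sin ψ * |Real.cos φ'| := by
  obtain ⟨hψ0, hψπ⟩ := hψ
  have hsψ : 0 < Real.sin ψ := Real.sin_pos_of_pos_of_lt_pi hψ0 hψπ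
  set A : ℝ := Real.sin ψ * Real.sin φ' with hA
  set B : ℝ := Real.cos ψ with hB
  set k : ℝ := A^2 + B^2 with hk
  have h1k : Real.sin ψ ^ 2 * Real.cos φ' ^ 2 = 1 - k := by
    have h2 := Real.sin_sq_add_cos_sq ψ
    have h3 := Real.sin_sq_add_cos_sq φ'
    simp only [hk, hA, hB]
    nlinarith [h2, h3]
  have hone : 0 < 1 - k := by
    have hx : (Real.sin ψ * Real.cos φ') ^ 2 ≠ 0 := pow_ne_zero 2 h
    have hx2 : 0 < (Real.sin ψ * Real.cos φ') ^ 2 := lt_of_le_of_ne (sq_nonneg _) (Ne.symm hx)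
    rw [← h1k, ← mul_pow]
    exact hx2
  have hRHS : 2 * π * Real.sin ψ * |Real.cos φ'| = 2 * π * Real.sqrt (1 - k) := by
    have h5 : Real.sin ψ * |Real.cos φ'| = Real.sqrt (1 - k) := by
      rw [← h1k, show Real.sin ψ ^ 2 * Real.cos φ' ^ 2 = (Real.sin ψ * |Real.cos φ'|) ^ 2 by
        rw [mul_pow, sq_abs]]
      rw [Real.sqrt_sq (mul_nonneg hsψ.le (abs_nonneg _))]
    rw [mul_assoc, h5]
  rw [hRHS]
  rcases eq_or_lt_of_le (show (0:ℝ) ≤ k from by positivity) with hk0 | hk0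
  · -- k = 0
    have hA0 : A = 0 := by nlinarith [sq_nonneg A, sq_nonneg B]
    have hB0 : B = 0 := by nlinarith [sq_nonneg A, sq_nonneg B]
    have hpt : Set.EqOn (fun φ => Real.sin ψ ^ 2 * Real.cos φ' ^ 2 /
        (1 - (Real.sin ψ * Real.sin φ * Real.sin φ' - Real.cos ψ * Real.cos φ) ^ 2))
        (fun _ => (1:ℝ)) (Set.uIcc (0:ℝ) (2*π)) := by
      intro φ _
      have hz : Real.sin ψ * Real.sin φ * Real.sin φ' - Real.cos ψ * Real.cos φ = 0 := by
        have : Real.sin ψ * Real.sin φ' = 0 := hA0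
        have hB0' : Real.cos ψ = 0 := hB0
        linear_combination Real.sin φ * this - Real.cos φ * hB0'
      simp only [hz]
      rw [h1k, ← hk0]
      norm_num
    rw [intervalIntegral.integral_congr hpt]
    simp [← hk0]
  · -- k > 0
    have hsk : 0 < Real.sqrt k := Real.sqrt_pos.2 hk0
    have hsk2 : Real.sqrt k ^ 2 = k := Real.sq_sqrt hk0.le
    set z : ℂ := (A : ℂ) + (B : ℂ) * Complex.I with hz
    have hzne : z ≠ 0 := by
      intro hc
      have : A = 0 ∧ B = 0 := by
        constructor
        · have := congrArg Complex.re hc; simpa [hz] using this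
        · have := congrArg Complex.im hc; simpa [hz] using this
      nlinarith [this.1, this.2]
    set θ : ℝ := Complex.arg z with hθ
    have habs : ‖z‖ = Real.sqrt k := by
      rw [hz, Complex.norm_def, Complex.normSq_add_mul_I, hk]
    have hcos : Real.cos θ = A / Real.sqrt k := by
      rw [hθ, Complex.cos_arg hzne, habs, hz]
      simp
    have hsin : Real.sin θ = B / Real.sqrt k := by
      rw [hθ, Complex.sin_arg, habs, hz]
      simp
    have hpt : Set.EqOn (fun φ => Real.sin ψ ^ 2 * Real.cos φ' ^ 2 /
        (1 - (Real.sin ψ * Real.sin φ * Real.sin φ' - Real.cos ψ * Real.cos φ) ^ 2))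
        (fun φ => (1-k) * (1 / ((1-k) * Real.sin (φ - θ) ^ 2 + Real.cos (φ - θ) ^ 2)))
        (Set.uIcc (0:ℝ) (2*π)) := by
      intro φ _
      simp only
      have e3 : Real.sin ψ * Real.sin φ * Real.sin φ' - Real.cos ψ * Real.cos φ
          = Real.sqrt k * Real.sin (φ - θ) := by
        rw [Real.sin_sub, hcos, hsin]
        field_simp
        ring
      have e4 : 1 - (Real.sin ψ * Real.sin φ * Real.sin φ' - Real.cos ψ * Real.cos φ) ^ 2
          = (1-k) * Real.sin (φ - θ) ^ 2 + Real.cos (φ - θ) ^ 2 := by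
        rw [e3, mul_pow, hsk2]
        linear_combination -Real.sin_sq_add_cos_sq (φ - θ)
      rw [e4, h1k, mul_one_div]
    rw [intervalIntegral.integral_congr hpt, intervalIntegral.integral_const_mul]
    rw [intervalIntegral.integral_comp_sub_right
      (fun x => 1 / ((1-k) * Real.sin x ^ 2 + Real.cos x ^ 2)) θ]
    have hper : Function.Periodic (fun x => 1 / ((1-k) * Real.sin x ^ 2 + Real.cos x ^ 2)) (2*π) := by
      intro x
      simp [Real.sin_add_two_pi, Real.cos_add_two_pi]
    have hshift := hper.intervalIntegral_add_eq (0 - θ) 0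
    rw [show (2*π - θ) = (0 - θ) + 2*π by ring, hshift, zero_add, core_integral (1-k) hone]
    have hu := Real.sq_sqrt hone.le
    have hs1 : Real.sqrt (1-k) ≠ 0 := (Real.sqrt_pos.2 hone).ne'
    field_simp
    linear_combination (-1) * hu
end
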